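/- Let A be a finite set with |A| = n ≥ 1, U the uniform distribution on A, and P a probability distribution on A with Δ(P,U) = δ. If s is an integer with s > n(1-δ), then there exists a probability distribution P' on A with Δ(P',U) = δ such that the sum of the s largest values of P' equals 1, and this is the maximum possible. -/
import Mathlib


/-- If `P` is a distribution on `A` (`|A| = n ≥ 1`) with `Δ(P,U) = δ`
and `s > n(1-δ)`, then there is a distribution `P'` with `Δ(P',U) = δ` whose sum
of `s` largest values equals `1`, and `1` is the maximum of such sums over all
distributions at distance `δ` from uniform. -/
theorem stmt_1 {A : Type*} [Fintype A] [DecidableEq A] (n : ℕ)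
    (hn : Fintype.card A = n) (hn1 : 1 ≤ n)
    (P : A → ℝ) (hP0 : ∀ a, 0 ≤ P a) (hP1 : (∑ a, P a) = 1)
    (δ : ℝ) (hδ : (1 / 2) * ∑ a, |P a - 1 / n| = δ)
    (s : ℕ) (hs1 : 1 ≤ s) (hs2 : (n : ℝ) * (1 - δ) < s) (hs3 : s ≤ n) :
    IsGreatest
      {v : ℝ | ∃ (P' : A → ℝ) (S : Finset A),
        (∀ a, 0 ≤ P' a) ∧ (∑ a, P' a) = 1 ∧
        (1 / 2) * ∑ a, |P' a - 1 / n| = δ ∧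
        S.card = s ∧ v = ∑ a ∈ S, P' a}
      1 := by
  have hn0 : (0:ℝ) < n := by exact_mod_cast Nat.lt_of_lt_of_le Nat.zero_lt_one hn1
  have hδ0 : 0 ≤ δ := by
    rw [← hδ]
    have : (0:ℝ) ≤ ∑ a, |P a - 1 / n| := Finset.sum_nonneg fun a _ => abs_nonneg _
    linarith
  -- sum of 1/n over univ is 1
  have hsumu : (∑ _a : A, (1 / n : ℝ)) = 1 := by
    rw [Finset.sum_const, Finset.card_univ, hn, nsmul_eq_mul]
    field_simp
  -- there is a point with P a ≥ 1/n
  obtain ⟨a0, -, ha0⟩ : ∃ a ∈ Finset.univ, (1 / n : ℝ) ≤ P a := by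
    apply Finset.exists_le_of_sum_le
    · rw [← Finset.card_pos, Finset.card_univ, hn]; exact hn1
    · rw [hsumu, hP1]
  -- δ ≤ 1 - 1/n
  have habs : ∀ a : A, |P a - 1 / n| = 2 * max (1 / n - P a) 0 + (P a - 1 / n) := by
    intro a
    rcases le_total (P a) (1 / n) with h | h
    · rw [abs_of_nonpos (by linarith), max_eq_left (by linarith)]; ring
    · rw [abs_of_nonneg (by linarith), max_eq_right (by linarith)]; ring
  have hδ1 : δ ≤ 1 - 1 / n := by
    rw [← hδ]
    have h1 : (∑ a, |P a - 1 / n|) = 2 * ∑ a, max (1 / n - P a) 0 := by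
      rw [Finset.sum_congr rfl fun a _ => habs a, Finset.sum_add_distrib,
        Finset.sum_sub_distrib, hP1, hsumu, ← Finset.mul_sum]
      ring
    have h2 : (∑ a, max (1 / n - P a) 0) ≤ (n - 1) * (1 / n) := by
      rw [← Finset.add_sum_erase _ _ (Finset.mem_univ a0)]
      have ha0' : max (1 / n - P a0) 0 = 0 := max_eq_right (by linarith)
      rw [ha0', zero_add]
      calc (∑ a ∈ Finset.univ.erase a0, max (1 / n - P a) 0)
          ≤ ∑ _a ∈ Finset.univ.erase a0, (1 / n : ℝ) := by
            apply Finset.sum_le_sum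
            intro a _
            apply max_le (by have := hP0 a; linarith) (by positivity)
        _ = (n - 1) * (1 / n) := by
            rw [Finset.sum_const, Finset.card_erase_of_mem (Finset.mem_univ a0),
              Finset.card_univ, hn, nsmul_eq_mul, Nat.cast_sub hn1, Nat.cast_one]
    rw [h1]
    have : (1:ℝ) - 1 / n = (n - 1) * (1 / n) := by field_simp
    rw [this]; linarith
  -- s ≥ 2
  have hs2' : 2 ≤ s := by
    by_contra h
    interval_cases s
    have : (n:ℝ) * (1 - δ) ≥ (n:ℝ) * (1 / n) := by
      apply mul_le_mul_of_nonneg_left (by linarith) (le_of_lt hn0)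
    have hn1' : (n:ℝ) * (1 / n) = 1 := by field_simp
    rw [hn1'] at this
    norm_num at hs2
    linarith
  have hsR : (1:ℝ) < s := by exact_mod_cast hs2'
  -- pick S containing a0 of card s
  obtain ⟨S, hS0, hScard⟩ : ∃ S : Finset A, {a0} ⊆ S ∧ S.card = s := by
    apply Finset.exists_superset_card_eq
    · simpa using hs1
    · rw [hn]; exact hs3
  have ha0S : a0 ∈ S := hS0 (Finset.mem_singleton_self a0)
  set c : ℝ := 1 - 1 / n - δ with hc_def
  have hc0 : 0 ≤ c := by rw [hc_def]; linarith
  set y : ℝ := c / ((s:ℝ) - 1) with hy_def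
  have hy0 : 0 ≤ y := div_nonneg hc0 (by linarith)
  have hyc : ((s:ℝ) - 1) * y = c := by
    rw [hy_def, mul_comm, div_mul_cancel₀ _ (ne_of_gt (by linarith : (0:ℝ) < (s:ℝ) - 1))]
  have hy1 : y ≤ 1 / n := by
    rw [hy_def, div_le_div_iff₀ (by linarith) hn0]
    have : (n:ℝ) * c = (n:ℝ) * (1 - δ) - 1 := by rw [hc_def]; field_simp; ring
    nlinarith
  -- the witness distribution
  set P' : A → ℝ := fun a => if a = a0 then 1 / n + δ else if a ∈ S then y else 0 with hP'
  have hP'0 : ∀ a, 0 ≤ P' a := by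
    intro a
    simp only [hP']
    split_ifs
    · positivity
    · exact hy0
    · exact le_refl 0
  have hP'a0 : P' a0 = 1 / n + δ := by simp [hP']
  have hP'erase : ∀ a ∈ S.erase a0, P' a = y := by
    intro a ha
    simp only [hP', if_neg (Finset.ne_of_mem_erase ha), if_pos (Finset.mem_of_mem_erase ha)]
  have hP'out : ∀ a ∉ S, P' a = 0 := by
    intro a ha
    have : a ≠ a0 := fun h => ha (h ▸ ha0S)
    simp [hP', this, ha]
  have hcard_erase : (S.erase a0).card = s - 1 := by
    rw [Finset.card_erase_of_mem ha0S, hScard]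
  have hcast : ((s - 1 : ℕ) : ℝ) = (s:ℝ) - 1 := by
    rw [Nat.cast_sub hs1, Nat.cast_one]
  -- sum over S is 1
  have hsumS : (∑ a ∈ S, P' a) = 1 := by
    rw [← Finset.add_sum_erase _ _ ha0S, hP'a0,
      Finset.sum_congr rfl hP'erase, Finset.sum_const, hcard_erase, nsmul_eq_mul, hcast, hyc]
    rw [hc_def]; ring
  -- sum over univ is 1
  have hsumU : (∑ a, P' a) = 1 := by
    rw [← Finset.sum_subset (Finset.subset_univ S) (fun a _ ha => hP'out a ha)]
    exact hsumS
  -- statistical distance is δ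
  have hdist : (1 / 2) * ∑ a, |P' a - 1 / n| = δ := by
    have hsplit : (∑ a, |P' a - 1 / n|) =
        (∑ a ∈ Finset.univ \ S, |P' a - 1 / n|) + ∑ a ∈ S, |P' a - 1 / n| :=
      (Finset.sum_sdiff (Finset.subset_univ S)).symm
    have h1 : (∑ a ∈ Finset.univ \ S, |P' a - 1 / n|) = ((n:ℝ) - s) * (1 / n) := by
      rw [Finset.sum_congr rfl (fun a ha => ?_), Finset.sum_const, nsmul_eq_mul]
      · congr 1
        rw [Finset.card_sdiff_of_subset (Finset.subset_univ S), Finset.card_univ, hn, hScard,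
          Nat.cast_sub hs3]
      · rw [hP'out a (Finset.mem_sdiff.mp ha).2, zero_sub, abs_neg, abs_of_nonneg (by positivity)]
    have h2 : (∑ a ∈ S, |P' a - 1 / n|) = δ + ((s:ℝ) - 1) * (1 / n - y) := by
      rw [← Finset.add_sum_erase _ _ ha0S, hP'a0]
      congr 1
      · rw [add_sub_cancel_left, abs_of_nonneg hδ0]
      · rw [Finset.sum_congr rfl (fun a ha => ?_), Finset.sum_const, hcard_erase,
          nsmul_eq_mul, hcast]
        rw [hP'erase a ha, abs_of_nonpos (by linarith), neg_sub]
    rw [hsplit, h1, h2, mul_sub ((s:ℝ) - 1), hyc, hc_def]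
    field_simp
    ring
  constructor
  · exact ⟨P', S, hP'0, hsumU, hdist, hScard, hsumS.symm⟩
  · rintro v ⟨Q, T, hQ0, hQ1, -, -, rfl⟩
    calc (∑ a ∈ T, Q a) ≤ ∑ a, Q a :=
          Finset.sum_le_sum_of_subset_of_nonneg (Finset.subset_univ T) fun a _ _ => hQ0 a
      _ = 1 := hQ1
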